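/- Taking the mirror image of a virtual knot transforms the odd writhe polynomial by f_{\bar{K}}(t) = −t² · f_K(t⁻¹). -/

import Mathlib

open Finset LaurentPolynomial

/-- A signed, oriented chord diagram (combinatorial Gauss diagram) with `n` chords:
the `2*n` chord endpoints on the circle are the elements of `Fin (2*n)` in (positive)
cyclic order; chord `i` has over endpoint `c⁺ = ep (i, true)`, under endpoint
`c⁻ = ep (i, false)` and a sign (writhe) `sign i ∈ {1, -1}`. -/
structure ChordDiagram (n : ℕ) where
  ep : Fin n × Bool ≃ Fin (2 * n)
  sign : Fin n → ℤ
  sign_unit : ∀ i, sign i = 1 ∨ sign i = -1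

namespace ChordDiagram

variable {n : ℕ}

/-- the over endpoint `c⁺` of a chord -/
def _root_.ChordDiagram.over (D : ChordDiagram n) (i : Fin n) : Fin (2 * n) := D.ep (i, true)

/-- the under endpoint `c⁻` of a chord -/
def under (D : ChordDiagram n) (i : Fin n) : Fin (2 * n) := D.ep (i, false)

/-- the number of steps from `b` to `x`, travelling in the positive direction
around the circle -/
def relpos (b x : Fin (2 * n)) : ℕ := (x.val + 2 * n - b.val) % (2 * n)

/-- `x` lies strictly between the endpoints of chord `i`, on the side swept out
going from `c⁺` to `c⁻` in the positive direction -/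
def StrictlyBetween (D : ChordDiagram n) (i : Fin n) (x : Fin (2 * n)) : Prop :=
  0 < relpos (D.over i) x ∧ relpos (D.over i) x < relpos (D.over i) (D.under i)

instance (D : ChordDiagram n) (i : Fin n) (x : Fin (2 * n)) :
    Decidable (D.StrictlyBetween i x) := inferInstanceAs (Decidable (_ ∧ _))

/-- two distinct chords interlink if their endpoints alternate around the circle,
i.e. exactly one endpoint of `j` lies strictly between the endpoints of `i` -/
def Interlinks (D : ChordDiagram n) (i j : Fin n) : Prop :=
  i ≠ j ∧ Xor' (D.StrictlyBetween i (D.over j)) (D.StrictlyBetween i (D.under j))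

instance (D : ChordDiagram n) (i j : Fin n) : Decidable (D.Interlinks i j) :=
  inferInstanceAs (Decidable (_ ∧ Xor _ _))

/-- the number of chords interlinking chord `i` -/
def interlinkCount (D : ChordDiagram n) (i : Fin n) : ℕ :=
  (univ.filter fun j => D.Interlinks i j).card

/-- the number of chord endpoints lying (strictly) on one side of chord `i` -/
def sideCount (D : ChordDiagram n) (i : Fin n) : ℕ :=
  (univ.filter fun x => D.StrictlyBetween i x).card

/-- a chord is odd if it interlinks an odd number of other chords -/
def OddChord (D : ChordDiagram n) (i : Fin n) : Prop := Odd (D.interlinkCount i)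

instance (D : ChordDiagram n) (i : Fin n) : Decidable (D.OddChord i) :=
  inferInstanceAs (Decidable (Odd _))

/-- The label `N(a)` of the arc whose terminal point is `a`: the sum of the signs of
all chords whose over endpoint is met strictly before their under endpoint when
traversing the circle once in the positive direction starting inside this arc. -/
def arcLabel (D : ChordDiagram n) (a : Fin (2 * n)) : ℤ :=
  ∑ i ∈ univ.filter fun i => relpos a (D.over i) < relpos a (D.under i), D.sign i

/-- The value `N(c)` of a chord: for a positive chord, the difference `x - y` of the
arc labels just before `c⁺` and just before `c⁻`; for a negative chord, the difference
`z - w` of the arc labels just after `c⁺` and just after `c⁻` (the label just after an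
over endpoint is the label just before it minus the sign, and the label just after an
under endpoint is the label just before it plus the sign). -/
def chordVal (D : ChordDiagram n) (i : Fin n) : ℤ :=
  if D.sign i = 1 then D.arcLabel (D.over i) - D.arcLabel (D.under i)
  else (D.arcLabel (D.over i) - D.sign i) - (D.arcLabel (D.under i) + D.sign i)

/-- the odd writhe `J(K) = Σ_{c odd} w(c)` -/
def oddWrithe (D : ChordDiagram n) : ℤ :=
  ∑ i ∈ univ.filter fun i => D.OddChord i, D.sign i

/-- the odd writhe polynomial `f_K(t) = Σ_{c odd} w(c) · t^{N(c)} ∈ ℤ[t,t⁻¹]` -/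
noncomputable def owp (D : ChordDiagram n) : LaurentPolynomial ℤ :=
  ∑ i ∈ univ.filter fun i => D.OddChord i, C (D.sign i) * T (D.chordVal i)

/-- evaluation of the odd writhe polynomial at a rational number `x`:
`Σ_{c odd} w(c) · x^{N(c)}` -/
def owpEval (D : ChordDiagram n) (x : ℚ) : ℚ :=
  ∑ i ∈ univ.filter fun i => D.OddChord i, (D.sign i : ℚ) * x ^ D.chordVal i

/-- the coefficient of `t^k` in a Laurent polynomial -/
def coeffOf (f : LaurentPolynomial ℤ) (k : ℤ) : ℤ := f.coeff k

/-- the degree `Deg f = max { |i| : coefficient of tⁱ in f is nonzero }` -/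
def owpDeg (f : LaurentPolynomial ℤ) : ℕ := f.coeff.support.sup fun k => k.natAbs

/-- reversing the orientation of the knot: the cyclic order of the endpoints is
reversed, while signs and over/under data of the crossings are preserved -/
def reverse (D : ChordDiagram n) : ChordDiagram n where
  ep := D.ep.trans Fin.revPerm
  sign := D.sign
  sign_unit := D.sign_unit

/-- the mirror image: every crossing is switched, so every chord's over and under
endpoints are exchanged and its sign is negated -/
def mirror (D : ChordDiagram n) : ChordDiagram n where
  ep := (Equiv.prodCongr (Equiv.refl (Fin n))
      ⟨fun b => !b, fun b => !b, Bool.not_not, Bool.not_not⟩).trans D.ep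
  sign := fun i => -D.sign i
  sign_unit := fun i => (D.sign_unit i).elim
    (fun h => Or.inr (show -D.sign i = -1 by rw [h]))
    (fun h => Or.inl (show -D.sign i = 1 by rw [h]; ring))

/-! ### Planarity via the Euler characteristic of the carrier surface

The diagram determines a 4-valent graph (vertices = chords, edges = the `2*n` arcs of
the circle) together with a rotation system at each vertex, coming from the structure
of a transversal crossing: for a positive crossing the counterclockwise order of the
four ends is (over-out, under-out, over-in, under-in), for a negative crossing it is
(over-out, under-in, over-in, under-out).  The diagram is realizable by a classical
(planar) knot diagram iff the resulting closed oriented carrier surface is a sphere,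
i.e. iff `V - E + F = n - 2n + F = 2`.

Darts are encoded as pairs `(p, io) : Fin (2*n) × Bool`, meaning the end of an arc
at the vertex through the circle point `p`, with `io = true` for the outgoing arc
(from `p` to `p+1`) and `io = false` for the incoming arc (from `p-1` to `p`). -/

/-- the other endpoint of the chord through a given endpoint -/
def otherEnd (D : ChordDiagram n) (p : Fin (2 * n)) : Fin (2 * n) :=
  D.ep ((D.ep.symm p).1, !(D.ep.symm p).2)

lemma otherEnd_otherEnd (D : ChordDiagram n) (p : Fin (2 * n)) :
    D.otherEnd (D.otherEnd p) = p := by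
  simp [otherEnd]

/-- whether the rotation at the vertex toggles the in/out marker when passing from
the end at `p` to the end at the other endpoint of its chord -/
def tog (D : ChordDiagram n) (p : Fin (2 * n)) : Bool :=
  if D.sign (D.ep.symm p).1 = 1 then !(D.ep.symm p).2 else (D.ep.symm p).2

/-- the vertex rotation permutation on darts -/
def vertexPerm (D : ChordDiagram n) : Equiv.Perm (Fin (2 * n) × Bool) :=
  Equiv.trans
    ⟨fun x => (x.1, xor x.2 (D.tog x.1)), fun x => (x.1, xor x.2 (D.tog x.1)),
      fun x => by simp [Bool.xor_assoc], fun x => by simp [Bool.xor_assoc]⟩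
    ⟨fun x => (D.otherEnd x.1, x.2), fun x => (D.otherEnd x.1, x.2),
      fun x => by simp [otherEnd_otherEnd], fun x => by simp [otherEnd_otherEnd]⟩

/-- the edge involution on darts, matching the two ends of each arc -/
def arcPerm (D : ChordDiagram n) : Equiv.Perm (Fin (2 * n) × Bool) :=
  ⟨fun x => if x.2 then (finRotate (2 * n) x.1, false) else ((finRotate (2 * n)).symm x.1, true),
   fun x => if x.2 then (finRotate (2 * n) x.1, false) else ((finRotate (2 * n)).symm x.1, true),
   fun x => by rcases x with ⟨p, _ | _⟩ <;> simp only [Bool.false_eq_true, if_false, if_true, Equiv.apply_symm_apply, Equiv.symm_apply_apply],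
   fun x => by rcases x with ⟨p, _ | _⟩ <;> simp only [Bool.false_eq_true, if_false, if_true, Equiv.apply_symm_apply, Equiv.symm_apply_apply]⟩

/-- the face permutation on darts -/
def facePerm (D : ChordDiagram n) : Equiv.Perm (Fin (2 * n) × Bool) :=
  (D.arcPerm).trans D.vertexPerm

/-- the number of faces: the number of orbits of the face permutation -/
noncomputable def faceCount (D : ChordDiagram n) : ℕ :=
  Nat.card (MulAction.orbitRel.Quotient (Subgroup.zpowers D.facePerm) (Fin (2 * n) × Bool))

/-- the chord diagram arises from a classical (planar) knot diagram: the carrier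
surface has Euler characteristic `V - E + F = n - 2n + faceCount = 2` -/
def PlanarRealizable (D : ChordDiagram n) : Prop := D.faceCount = n + 2

end ChordDiagram



namespace ChordDiagram

variable {n : ℕ}

lemma relpos_eq (b x : Fin (2 * n)) : relpos b x =
    if b.val ≤ x.val then x.val - b.val else x.val + 2 * n - b.val := by
  have hb := b.isLt; have hx := x.isLt
  unfold relpos
  split
  · rw [show x.val + 2 * n - b.val = (x.val - b.val) + 2 * n by omega, Nat.add_mod_right,
      Nat.mod_eq_of_lt (by omega)]
  · rw [Nat.mod_eq_of_lt (by omega)]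

lemma relpos_inj {a x y : Fin (2 * n)} (h : relpos a x = relpos a y) : x = y := by
  have ha := a.isLt; have hx := x.isLt; have hy := y.isLt
  rw [relpos_eq, relpos_eq] at h
  apply Fin.ext
  split at h <;> split at h <;> omega

@[simp] lemma mirror_over (D : ChordDiagram n) (i : Fin n) : D.mirror.over i = D.under i := rfl

@[simp] lemma mirror_under (D : ChordDiagram n) (i : Fin n) : D.mirror.under i = D.over i := rfl

@[simp] lemma mirror_sign (D : ChordDiagram n) (i : Fin n) : D.mirror.sign i = -D.sign i := rfl

lemma over_ne_under (D : ChordDiagram n) (i j : Fin n) : D.over i ≠ D.under j := by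
  intro h
  have := D.ep.injective h
  simp at this

lemma sb_mirror (D : ChordDiagram n) (i : Fin n) (x : Fin (2 * n))
    (hx1 : x ≠ D.over i) (hx2 : x ≠ D.under i) :
    (D.mirror.StrictlyBetween i x ↔ ¬ D.StrictlyBetween i x) := by
  have hou : D.over i ≠ D.under i := D.over_ne_under i i
  have h1 : (D.over i).val < 2 * n := (D.over i).isLt
  have h2 : (D.under i).val < 2 * n := (D.under i).isLt
  have h3 : x.val < 2 * n := x.isLt
  have e1 : x.val ≠ (D.over i).val := fun h => hx1 (Fin.ext h)
  have e2 : x.val ≠ (D.under i).val := fun h => hx2 (Fin.ext h)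
  have e3 : (D.over i).val ≠ (D.under i).val := fun h => hou (Fin.ext h)
  simp only [StrictlyBetween, mirror_over, mirror_under, relpos_eq]
  split <;> split <;> split <;> split <;> omega

lemma interlinks_mirror (D : ChordDiagram n) (i j : Fin n) :
    D.mirror.Interlinks i j ↔ D.Interlinks i j := by
  unfold Interlinks
  by_cases hij : i = j
  · simp [hij]
  · have h1 : D.over j ≠ D.over i := by
      intro h; have := D.ep.injective h; simp [Prod.ext_iff] at this; exact hij this.symm
    have h2 : D.under j ≠ D.under i := by
      intro h; have := D.ep.injective h; simp [Prod.ext_iff] at this; exact hij this.symm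
    have h3 : D.under j ≠ D.over i := fun h => D.over_ne_under i j h.symm
    have h4 : D.over j ≠ D.under i := D.over_ne_under j i
    simp only [hij, mirror_over, mirror_under, true_and, ne_eq, not_false_iff]
    rw [D.sb_mirror i (D.under j) h3 h2, D.sb_mirror i (D.over j) h1 h4]
    unfold Xor' Xor
    tauto

lemma oddChord_mirror (D : ChordDiagram n) (i : Fin n) :
    D.mirror.OddChord i ↔ D.OddChord i := by
  unfold OddChord interlinkCount
  rw [filter_congr fun j _ => by rw [interlinks_mirror]]

lemma arcLabel_mirror (D : ChordDiagram n) (a : Fin (2 * n)) :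
    D.mirror.arcLabel a = D.arcLabel a - ∑ j, D.sign j := by
  unfold arcLabel
  have key : ∀ j : Fin n, (relpos a (D.mirror.over j) < relpos a (D.mirror.under j)) ↔
      ¬ (relpos a (D.over j) < relpos a (D.under j)) := by
    intro j
    have hne : relpos a (D.over j) ≠ relpos a (D.under j) :=
      fun h => D.over_ne_under j j (relpos_inj h)
    simp only [mirror_over, mirror_under]
    omega
  rw [filter_congr fun j _ => by rw [key]]
  have := Finset.sum_filter_add_sum_filter_not (univ : Finset (Fin n))
    (fun j => relpos a (D.over j) < relpos a (D.under j)) D.sign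
  have hm : ∀ j : Fin n, D.mirror.sign j = -D.sign j := fun _ => rfl
  simp only [hm, Finset.sum_neg_distrib]
  omega

lemma chordVal_mirror (D : ChordDiagram n) (i : Fin n) :
    D.mirror.chordVal i = 2 - D.chordVal i := by
  unfold chordVal
  rcases D.sign_unit i with h | h
  · rw [if_pos h, if_neg (by rw [mirror_sign, h]; norm_num)]
    simp [arcLabel_mirror, h]
    ring
  · rw [if_pos (show D.mirror.sign i = 1 by rw [mirror_sign, h]; norm_num),
      if_neg (show ¬ D.sign i = 1 by rw [h]; norm_num)]
    simp [arcLabel_mirror, h]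
    ring

end ChordDiagram

open ChordDiagram

/-- taking the mirror image transforms the odd writhe polynomial by
`f_{K̄}(t) = -t² · f_K(t⁻¹)`. -/
theorem stmt_10 {n : ℕ} (D : ChordDiagram n) :
    D.mirror.owp = -(T 2 * LaurentPolynomial.invert D.owp) := by
  unfold owp
  rw [filter_congr fun i _ => by rw [oddChord_mirror], map_sum, Finset.mul_sum,
    ← Finset.sum_neg_distrib]
  refine Finset.sum_congr rfl fun i _ => ?_
  rw [mirror_sign, chordVal_mirror, map_mul, invert_C, invert_T,
    show (2 - D.chordVal i : ℤ) = 2 + -D.chordVal i by ring, T_add, map_neg]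
  ring
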